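/- arXiv:2212.05047 — 2 statements merged into one kernel-verified Lean document; each statement's English description precedes it below -/
import Mathlib

section
/- Let D be a bounded domain in ℂ, g : D → ℝ be in L¹(D), and let u be a weak solution of the equation div(A(z)∇u(z)) = g(z) with a matrix function A : D → S^{2×2} whose elements a_ij(z), i,j = 1,2, are bounded and measurable. If v is A-conjugate of u, then ω := u + iv satisfies the nondegenerate inhomogeneous Beltrami equation ω_{z̄} = μ(z)·ω_z + σ(z) with μ(z) := (a_22(z) − a_11(z) − 2i·a_21(z)) / det(I + A(z)) and σ(z) := 𝒩^g_{z̄}(z) + μ(z)·conj(𝒩^g_{z̄}(z)). -/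
open MeasureTheory Set Filter Topology Metric Complex Bornology Matrix

noncomputable section

/-- Pointwise Wirtinger derivative `∂f/∂z = (f_x − i f_y)/2`. -/
def wDz (f : ℂ → ℂ) (z : ℂ) : ℂ :=
  (fderiv ℝ f z 1 - Complex.I * fderiv ℝ f z Complex.I) / 2

/-- Pointwise Wirtinger derivative `∂f/∂z̄ = (f_x + i f_y)/2`. -/
def wDzbar (f : ℂ → ℂ) (z : ℂ) : ℂ :=
  (fderiv ℝ f z 1 + Complex.I * fderiv ℝ f z Complex.I) / 2

/-- `∂h/∂z̄` of a real-valued function, as a complex number. -/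
def wDzbarR (h : ℂ → ℝ) (z : ℂ) : ℂ :=
  (((fderiv ℝ h z 1 : ℝ) : ℂ) + Complex.I * ((fderiv ℝ h z Complex.I : ℝ) : ℂ)) / 2

/-- Real-valued test functions of class `C^n` with compact support in `D`. -/
def TestFunR (n : ℕ∞) (D : Set ℂ) (φ : ℂ → ℝ) : Prop :=
  ContDiff ℝ n φ ∧ HasCompactSupport φ ∧ tsupport φ ⊆ D

/-- Complex-valued test functions of class `C^n` with compact support in `D`. -/
def TestFunC (n : ℕ∞) (D : Set ℂ) (φ : ℂ → ℂ) : Prop :=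
  ContDiff ℝ n φ ∧ HasCompactSupport φ ∧ tsupport φ ⊆ D

/-- `f₁` is the weak (distributional) Wirtinger `∂/∂z`–derivative of `f` on `D`. -/
def HasWeakDzOn (f f₁ : ℂ → ℂ) (D : Set ℂ) : Prop :=
  ∀ φ : ℂ → ℂ, TestFunC ⊤ D φ →
    (∫ z in D, f z * wDz φ z) = - ∫ z in D, f₁ z * φ z

/-- `f₂` is the weak (distributional) Wirtinger `∂/∂z̄`–derivative of `f` on `D`. -/
def HasWeakDzbarOn (f f₂ : ℂ → ℂ) (D : Set ℂ) : Prop :=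
  ∀ φ : ℂ → ℂ, TestFunC ⊤ D φ →
    (∫ z in D, f z * wDzbar φ z) = - ∫ z in D, f₂ z * φ z

/-- `g` is the weak partial derivative of `u` on `D` in the direction `v`. -/
def HasWeakPartialOn (u g : ℂ → ℝ) (v : ℂ) (D : Set ℂ) : Prop :=
  ∀ φ : ℂ → ℝ, TestFunR ⊤ D φ →
    (∫ z in D, u z * fderiv ℝ φ z v) = - ∫ z in D, g z * φ z

/-- `gu` is the weak gradient of `u` on `D`. -/
def HasWeakGradientOn (u : ℂ → ℝ) (gu : ℂ → Fin 2 → ℝ) (D : Set ℂ) : Prop :=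
  HasWeakPartialOn u (fun z => gu z 0) 1 D ∧ HasWeakPartialOn u (fun z => gu z 1) Complex.I D

/-- Membership in `L^p(D)`. -/
def MemLpOn {E : Type*} [NormedAddCommGroup E] (f : ℂ → E) (p : ℝ) (D : Set ℂ) : Prop :=
  MemLp f (ENNReal.ofReal p) (volume.restrict D)

/-- Membership in `L^p_loc(D)`. -/
def MemLpLocOn {E : Type*} [NormedAddCommGroup E] (f : ℂ → E) (p : ℝ) (D : Set ℂ) : Prop :=
  ∀ z ∈ D, ∃ U : Set ℂ, IsOpen U ∧ z ∈ U ∧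
    MemLp f (ENNReal.ofReal p) (volume.restrict (D ∩ U))

/-- Membership in the Sobolev class `W^{1,p}_loc(D)` for complex-valued functions,
via weak Wirtinger derivatives. -/
def MemW1pLocC (f : ℂ → ℂ) (p : ℝ) (D : Set ℂ) : Prop :=
  ∃ f₁ f₂ : ℂ → ℂ, HasWeakDzOn f f₁ D ∧ HasWeakDzbarOn f f₂ D ∧
    MemLpLocOn f₁ p D ∧ MemLpLocOn f₂ p D

/-- Hölder continuity of order `a` on a set `D`. -/
def HolderOnSet {E : Type*} [NormedAddCommGroup E] (f : ℂ → E) (a : ℝ) (D : Set ℂ) : Prop :=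
  ∃ C : ℝ, ∀ z ∈ D, ∀ w ∈ D, ‖f z - f w‖ ≤ C * ‖z - w‖ ^ a

/-- Local Hölder continuity of order `a` on `D`, i.e. the class `C^a_loc(D)`. -/
def HolderLocOn {E : Type*} [NormedAddCommGroup E] (f : ℂ → E) (a : ℝ) (D : Set ℂ) : Prop :=
  ∀ z ∈ D, ∃ U : Set ℂ, IsOpen U ∧ z ∈ U ∧ HolderOnSet f a (D ∩ U)

/-- The Ahlfors–Bers singular integral operator `T`, defined through the Cauchy
principal limit of the singular integral. -/
def cauchyT (g : ℂ → ℂ) (ζ : ℂ) : ℂ :=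
  limUnder (𝓝[>] (0 : ℝ)) fun ε : ℝ =>
    -(Real.pi : ℂ)⁻¹ * ∫ z in {z : ℂ | ε < ‖z - ζ‖}, g z / (z - ζ) ^ 2

/-- `Cp p` : the norm of the operator `T : L^p(ℂ) → L^p(ℂ)`. -/
def Cp (p : ℝ) : ℝ :=
  sInf {C : ℝ | 0 ≤ C ∧ ∀ g : ℂ → ℂ, MemLp g (ENNReal.ofReal p) volume →
    eLpNorm (cauchyT g) (ENNReal.ofReal p) volume ≤
      ENNReal.ofReal C * eLpNorm g (ENNReal.ofReal p) volume}

/-- `f` is a `μ`-conformal mapping of the plane: a homeomorphism of `ℂ` of class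
`W^{1,2}_loc` satisfying the Beltrami equation `f_z̄ = μ f_z` a.e. -/
def MuConformal (μ : ℂ → ℂ) (f : ℂ ≃ₜ ℂ) : Prop :=
  ∃ f₁ f₂ : ℂ → ℂ, HasWeakDzOn (⇑f) f₁ Set.univ ∧ HasWeakDzbarOn (⇑f) f₂ Set.univ ∧
    MemLpLocOn f₁ 2 Set.univ ∧ MemLpLocOn f₂ 2 Set.univ ∧
    ∀ᵐ z ∂(volume : Measure ℂ), f₂ z = μ z * f₁ z

/-- The (pointwise) Jacobian `J = |f_z|² − |f_z̄|²`. -/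
def jacDet (f : ℂ → ℂ) (z : ℂ) : ℝ :=
  ‖wDz f z‖ ^ 2 - ‖wDzbar f z‖ ^ 2

/-- `p_* = p²/(2(p−1))`. -/
def pStar (p : ℝ) : ℝ := p ^ 2 / (2 * (p - 1))

/-- The multiplier `g := ((f_z / J) · σ) ∘ f⁻¹`. -/
def gMul (f : ℂ ≃ₜ ℂ) (σ : ℂ → ℂ) (w : ℂ) : ℂ :=
  (wDz (⇑f) (f.symm w) / ((jacDet (⇑f) (f.symm w) : ℝ) : ℂ)) * σ (f.symm w)

/-- The class `S^{2×2}` : symmetric matrices with `det A = 1` and `det (I + A) > 0`. -/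
def InS22 (M : Matrix (Fin 2) (Fin 2) ℝ) : Prop :=
  M 0 1 = M 1 0 ∧ M.det = 1 ∧ 0 < (1 + M).det

/-- The complex coefficient `μ_A = (a₂₂ − a₁₁ − 2 i a₂₁)/det(I + A)`. -/
def muOfA (A : ℂ → Matrix (Fin 2) (Fin 2) ℝ) (z : ℂ) : ℂ :=
  (((A z 1 1 - A z 0 0 : ℝ) : ℂ) - 2 * Complex.I * ((A z 1 0 : ℝ) : ℂ)) /
    ((((1 + A z).det : ℝ)) : ℂ)

/-- The matrix associated with a Beltrami coefficient `μ`. -/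
def AOfMu (μ : ℂ → ℂ) (z : ℂ) : Matrix (Fin 2) (Fin 2) ℝ :=
  !![‖1 - μ z‖ ^ 2 / (1 - ‖μ z‖ ^ 2),
      -2 * (μ z).im / (1 - ‖μ z‖ ^ 2);
     -2 * (μ z).im / (1 - ‖μ z‖ ^ 2),
      ‖1 + μ z‖ ^ 2 / (1 - ‖μ z‖ ^ 2)]

/-- The gradient of a (test) function as a vector in `ℝ²`. -/
def gradVec (ψ : ℂ → ℝ) (z : ℂ) : Fin 2 → ℝ := ![fderiv ℝ ψ z 1, fderiv ℝ ψ z Complex.I]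

/-- The weak form of the identity `div (A ∇u) = h` on `D`, tested against `C^n_0(D)`:
`∫ ⟨A ∇u, ∇ψ⟩ + ∫ h ψ = 0`. -/
def DivIdentity (A : ℂ → Matrix (Fin 2) (Fin 2) ℝ) (gu : ℂ → Fin 2 → ℝ) (h : ℂ → ℝ)
    (D : Set ℂ) (n : ℕ∞) : Prop :=
  ∀ ψ : ℂ → ℝ, TestFunR n D ψ →
    (∫ z in D, dotProduct ((A z).mulVec (gu z)) (gradVec ψ z)) +
      (∫ z in D, h z * ψ z) = 0

/-- `u` is a weak solution of `div (A ∇u) = h` on `D`, with weak gradient `gu`,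
in the class `W^{1,1}_loc(D)`. -/
def IsWeakSolutionDiv (A : ℂ → Matrix (Fin 2) (Fin 2) ℝ) (h : ℂ → ℝ) (u : ℂ → ℝ)
    (gu : ℂ → Fin 2 → ℝ) (D : Set ℂ) (n : ℕ∞) : Prop :=
  LocallyIntegrableOn u D ∧ LocallyIntegrableOn gu D ∧
    HasWeakGradientOn u gu D ∧ DivIdentity A gu h D n

/-- The logarithmic (Newtonian) potential of the source `g` on `D`. -/
def logPot (g : ℂ → ℝ) (D : Set ℂ) (z : ℂ) : ℝ :=
  (2 * Real.pi)⁻¹ * ∫ w in D, Real.log (‖z - w‖) * g w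

/-- `σ = 𝒩^g_z̄ + μ ⋅ conj 𝒩^g_z̄`. -/
def sigmaOf (g : ℂ → ℝ) (D : Set ℂ) (μ : ℂ → ℂ) (z : ℂ) : ℂ :=
  wDzbarR (logPot g D) z + μ z * (starRingEnd ℂ) (wDzbarR (logPot g D) z)

/-- The Hodge operator `ℍ = [[0,−1],[1,0]]` acting on vectors of `ℝ²`. -/
def hodge (v : Fin 2 → ℝ) : Fin 2 → ℝ := ![-(v 1), v 0]

/-- The quasihyperbolic distance in `D`. -/
def qhDist (D : Set ℂ) (z w : ℂ) : ℝ :=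
  sInf {L : ℝ | ∃ γ : ℝ → ℂ, γ 0 = z ∧ γ 1 = w ∧ (∀ t ∈ Icc (0:ℝ) 1, γ t ∈ D) ∧
    ContDiff ℝ 1 γ ∧ L = ∫ t in Icc (0:ℝ) 1, ‖deriv γ t‖ / infDist (γ t) (frontier D)}

/-- The quasihyperbolic boundary condition of Gehring–Martio. -/
def QuasihyperbolicBC (D : Set ℂ) : Prop :=
  ∃ z₀ ∈ D, ∃ a b : ℝ, ∀ z ∈ D,
    qhDist D z z₀ ≤ a + b * Real.log (infDist z₀ (frontier D) / infDist z (frontier D))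

/-- `τ` is a tangent direction to `∂D` at `ζ`. -/
def TangentDirAt (D : Set ℂ) (ζ τ : ℂ) : Prop :=
  ‖τ‖ = 1 ∧ ∀ ε : ℝ, 0 < ε → ∃ δ : ℝ, 0 < δ ∧ ∀ w ∈ frontier D,
    ‖w - ζ‖ < δ → |((w - ζ) / τ).im| ≤ ε * ‖w - ζ‖

/-- `∂D` has a tangent at `ζ`. -/
def HasTangentAt (D : Set ℂ) (ζ : ℂ) : Prop := ∃ τ : ℂ, TangentDirAt D ζ τ

/-- `E` has logarithmic capacity zero: every probability measure concentrated on `E`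
has infinite logarithmic energy. -/
def CapZero (E : Set ℂ) : Prop :=
  ∀ μ : Measure ℂ, IsProbabilityMeasure μ → μ Eᶜ = 0 →
    (∫⁻ z, ∫⁻ w, ENNReal.ofReal (-Real.log (‖z - w‖)) ∂μ ∂μ) = ⊤

/-- `P` holds quasi-everywhere (q.e.) on `B`, i.e. up to a set of logarithmic capacity zero. -/
def QEOn (B : Set ℂ) (P : ℂ → Prop) : Prop := CapZero {ζ | ζ ∈ B ∧ ¬P ζ}

/-- A set measurable with respect to logarithmic capacity: a union of a sigma-compactum
and a set of capacity zero. -/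
def CapMeasurableSet (S : Set ℂ) : Prop :=
  ∃ K Z : Set ℂ, (∃ c : ℕ → Set ℂ, (∀ n, IsCompact (c n)) ∧ K = ⋃ n, c n) ∧
    CapZero Z ∧ S = K ∪ Z

/-- A real-valued boundary function measurable with respect to logarithmic capacity. -/
def CapMeasurableOn (φ : ℂ → ℝ) (B : Set ℂ) : Prop :=
  ∀ O : Set ℝ, IsOpen O → CapMeasurableSet {ζ | ζ ∈ B ∧ φ ζ ∈ O}

/-- `lam` is of countably bounded variation on `B`: there is a countable family of
mutually disjoint arcs of `B` on each of which `lam` has bounded variation, whose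
complement in `B` has logarithmic capacity zero. -/
def CBVOn (lam : ℂ → ℂ) (B : Set ℂ) : Prop :=
  ∃ γ : ℕ → ℝ → ℂ,
    (∀ n : ℕ, ContinuousOn (γ n) (Icc 0 1) ∧ InjOn (γ n) (Icc 0 1) ∧
      γ n '' Ioo 0 1 ⊆ B ∧ BoundedVariationOn (lam ∘ γ n) (Ioo 0 1)) ∧
    Pairwise (fun m n => Disjoint (γ m '' Ioo 0 1) (γ n '' Ioo 0 1)) ∧
    CapZero (B \ ⋃ n, γ n '' Ioo 0 1)

/-- A Jordan domain: a bounded domain whose boundary is a Jordan curve. -/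
def JordanDomain (D : Set ℂ) : Prop :=
  IsOpen D ∧ IsConnected D ∧ IsBounded D ∧
    ∃ γ : ℝ → ℂ, Continuous γ ∧ Function.Periodic γ 1 ∧ InjOn γ (Ico 0 1) ∧
      frontier D = γ '' Ico 0 1

/-- `f` has the angular (nontangential) limit `L` at the boundary point `ζ` of `D`. -/
def AngularLimitAt {E : Type*} [TopologicalSpace E] (f : ℂ → E) (D : Set ℂ) (ζ : ℂ)
    (L : E) : Prop :=
  ∀ c : ℝ, 1 < c →
    Tendsto f (𝓝[{z | z ∈ D ∧ ‖z - ζ‖ ≤ c * infDist z (frontier D)}] ζ) (𝓝 L)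

/-- The class `C^{1,a}_loc(D)` of functions with locally Hölder continuous derivatives. -/
def MemC1HolderLocOn (u : ℂ → ℝ) (a : ℝ) (D : Set ℂ) : Prop :=
  ∀ z ∈ D, ∃ U : Set ℂ, IsOpen U ∧ z ∈ U ∧ U ⊆ D ∧ ContDiffOn ℝ 1 u U ∧
    ∃ C : ℝ, ∀ x ∈ U, ∀ y ∈ U, ‖fderiv ℝ u x - fderiv ℝ u y‖ ≤ C * ‖x - y‖ ^ a

/-- `n` is the unit inner normal to `∂D` at `ζ`. -/
def IsInnerNormalAt (D : Set ℂ) (ζ n : ℂ) : Prop :=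
  ‖n‖ = 1 ∧ TangentDirAt D ζ (Complex.I * n) ∧
    ∃ ε : ℝ, 0 < ε ∧ ∀ t ∈ Ioo (0:ℝ) ε, ζ + (t : ℂ) * n ∈ D


/-! ### Auxiliary lemmas for `statement3` -/

/-- components of a locally integrable vector field are locally integrable -/
lemma s3_locint_comp {D : Set ℂ} {gu : ℂ → Fin 2 → ℝ} (h : LocallyIntegrableOn gu D)
    (i : Fin 2) : LocallyIntegrableOn (fun z => gu z i) D := by
  intro x hx
  obtain ⟨s, hs, hint⟩ := h x hx
  exact ⟨s, hs,
    (ContinuousLinearMap.proj (R := ℝ) (φ := fun _ : Fin 2 => ℝ) i).integrable_comp hint⟩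

/-- a locally integrable real function times a continuous compactly supported
complex function is integrable -/
lemma s3_mulTest_int {D : Set ℂ} (hD : MeasurableSet D) {h : ℂ → ℝ}
    (hh : LocallyIntegrableOn h D) {F : ℂ → ℂ} (hFc : Continuous F)
    (hFs : HasCompactSupport F) (hFsub : tsupport F ⊆ D) :
    IntegrableOn (fun z => (h z : ℂ) * F z) D := by
  have hint : IntegrableOn h (tsupport F) := hh.integrableOn_compact_subset hFsub hFs
  obtain ⟨C, hC⟩ := hFs.exists_bound_of_continuous hFc
  have h1 : IntegrableOn (fun z => F z * (h z : ℂ)) (tsupport F) :=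
    hint.ofReal.bdd_mul hFc.aestronglyMeasurable.restrict (ae_of_all _ hC)
  have h2 : IntegrableOn (fun z => (h z : ℂ) * F z) (tsupport F) := by
    simpa [mul_comm] using h1
  exact h2.of_forall_diff_eq_zero hD fun x hx => by
    simp [image_eq_zero_of_notMem_tsupport hx.2]

/-- a complex test function composed with a real-linear map to `ℝ` is a real test function -/
lemma s3_testR_comp {D : Set ℂ} {φ : ℂ → ℂ} (hφ : TestFunC ⊤ D φ) (L : ℂ →L[ℝ] ℝ) :
    TestFunR ⊤ D (fun z => L (φ z)) :=
  ⟨L.contDiff.comp hφ.1, hφ.2.1.comp_left (g := L) (map_zero L),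
    subset_trans (closure_mono (Function.support_comp_subset (map_zero L) φ)) hφ.2.2⟩

/-- Complexified weak partial derivative identity. -/
lemma s3_weakPartialC {D : Set ℂ} (hD : MeasurableSet D) {u g' : ℂ → ℝ}
    (hu : LocallyIntegrableOn u D) (hg : LocallyIntegrableOn g' D) {e : ℂ}
    (h : HasWeakPartialOn u g' e D) {φ : ℂ → ℂ} (hφ : TestFunC ⊤ D φ) :
    (∫ z in D, (u z : ℂ) * fderiv ℝ φ z e) = -∫ z in D, (g' z : ℂ) * φ z := by
  obtain ⟨hφc, hφs, hφsub⟩ := hφ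
  have hdiff : ∀ z, DifferentiableAt ℝ φ z := fun z =>
    (hφc.differentiable (by simp)) z
  set Fe : ℂ → ℂ := fun z => fderiv ℝ φ z e with hFe
  have hFec : Continuous Fe := by
    exact (hφc.continuous_fderiv (by simp)).clm_apply continuous_const
  have hFes : HasCompactSupport Fe :=
    (hφs.fderiv ℝ).comp_left (g := fun L : ℂ →L[ℝ] ℂ => L e) rfl
  have hFesub : tsupport Fe ⊆ D := by
    refine subset_trans ?_ (subset_trans (tsupport_fderiv_subset ℝ) hφsub)
    exact closure_mono
      (Function.support_comp_subset (g := fun L : ℂ →L[ℝ] ℂ => L e) rfl (fderiv ℝ φ))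
  have hre : ∀ z, fderiv ℝ (fun w => (φ w).re) z e = (Fe z).re := by
    intro z
    have : fderiv ℝ (Complex.reCLM ∘ φ) z = Complex.reCLM.comp (fderiv ℝ φ z) := by
      rw [fderiv_comp z Complex.reCLM.differentiableAt (hdiff z),
        ContinuousLinearMap.fderiv]
    exact congrArg (fun L => L e) this
  have him : ∀ z, fderiv ℝ (fun w => (φ w).im) z e = (Fe z).im := by
    intro z
    have : fderiv ℝ (Complex.imCLM ∘ φ) z = Complex.imCLM.comp (fderiv ℝ φ z) := by
      rw [fderiv_comp z Complex.imCLM.differentiableAt (hdiff z),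
        ContinuousLinearMap.fderiv]
    exact congrArg (fun L => L e) this
  have hintL : IntegrableOn (fun z => (u z : ℂ) * Fe z) D :=
    s3_mulTest_int hD hu hFec hFes hFesub
  have hintR : IntegrableOn (fun z => (g' z : ℂ) * φ z) D :=
    s3_mulTest_int hD hg hφc.continuous hφs hφsub
  have hL := setIntegral_re_add_im hintL
  have hR := setIntegral_re_add_im hintR
  have htestre := s3_testR_comp ⟨hφc, hφs, hφsub⟩ Complex.reCLM
  have htestim := s3_testR_comp ⟨hφc, hφs, hφsub⟩ Complex.imCLM
  have e1 := h _ htestre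
  have e2 := h _ htestim
  simp only [Complex.reCLM_apply, Complex.imCLM_apply] at e1 e2
  rw [← hL, ← hR]
  simp only [RCLike.re_to_complex, RCLike.im_to_complex, Complex.re_ofReal_mul,
    Complex.im_ofReal_mul]
  have hre' : (∫ z in D, u z * (Fe z).re) = - ∫ z in D, g' z * (φ z).re := by
    rw [← e1]; exact integral_congr_ae (Eventually.of_forall fun z => by
      show u z * (Fe z).re = u z * fderiv ℝ (fun w => (φ w).re) z e
      rw [hre z])
  have him' : (∫ z in D, u z * (Fe z).im) = - ∫ z in D, g' z * (φ z).im := by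
    rw [← e2]; exact integral_congr_ae (Eventually.of_forall fun z => by
      show u z * (Fe z).im = u z * fderiv ℝ (fun w => (φ w).im) z e
      rw [him z])
  rw [hre', him']
  push_cast
  ring

lemma s3_split4 {D : Set ℂ} {f1 f2 f3 f4 : ℂ → ℂ} (c1 c2 c3 c4 : ℂ)
    (h1 : IntegrableOn f1 D) (h2 : IntegrableOn f2 D) (h3 : IntegrableOn f3 D)
    (h4 : IntegrableOn f4 D) :
    ∫ z in D, (c1 * f1 z + c2 * f2 z + c3 * f3 z + c4 * f4 z) =
      c1 * (∫ z in D, f1 z) + c2 * (∫ z in D, f2 z) + c3 * (∫ z in D, f3 z)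
        + c4 * (∫ z in D, f4 z) := by
  have A2 : IntegrableOn (fun z => c1 * f1 z + c2 * f2 z) D := by
    exact (h1.const_mul c1).add (h2.const_mul c2)
  have A3 : IntegrableOn (fun z => c1 * f1 z + c2 * f2 z + c3 * f3 z) D := by
    exact A2.add (h3.const_mul c3)
  rw [integral_add A3 (h4.const_mul c4), integral_add A2 (h3.const_mul c3),
    integral_add (h1.const_mul c1) (h2.const_mul c2),
    integral_const_mul, integral_const_mul, integral_const_mul, integral_const_mul]

lemma s3_key_alg (a b d p q N0 N1 : ℝ) (hdet : a * d - b * b = 1)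
    (hΔ : ((1+a)*(1+d) - b*b : ℝ) ≠ 0) :
    (((p:ℂ) + Complex.I*((-(b*p + d*q) + N1 : ℝ):ℂ))
        + Complex.I*((q:ℂ) + Complex.I*((a*p + b*q - N0 : ℝ):ℂ)))/2
    = ((((d - a:ℝ):ℂ) - 2*Complex.I*((b:ℝ):ℂ)) / (((1+a)*(1+d) - b*b : ℝ):ℂ)) *
      ((((p:ℂ) + Complex.I*((-(b*p + d*q) + N1 : ℝ):ℂ))
          - Complex.I*((q:ℂ) + Complex.I*((a*p + b*q - N0:ℝ):ℂ)))/2)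
      + ((((N0:ℝ):ℂ) + Complex.I*((N1:ℝ):ℂ))/2
         + ((((d - a:ℝ):ℂ) - 2*Complex.I*((b:ℝ):ℂ)) / (((1+a)*(1+d) - b*b:ℝ):ℂ)) *
            ((((N0:ℝ):ℂ) - Complex.I*((N1:ℝ):ℂ))/2)) := by
  have hΔC : (((1+a)*(1+d) - b*b : ℝ):ℂ) ≠ 0 := by exact_mod_cast hΔ
  push_cast at hΔC ⊢
  set Δc : ℂ := (1+(a:ℂ))*(1+(d:ℂ)) - (b:ℂ)*(b:ℂ) with hΔdef
  set num : ℂ := ((d:ℂ) - (a:ℂ)) - 2*Complex.I*(b:ℂ) with hnum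
  set W2 : ℂ := (((p:ℂ) + Complex.I*(-((b:ℂ)*p + (d:ℂ)*q) + N1))
        + Complex.I*((q:ℂ) + Complex.I*((a:ℂ)*p + (b:ℂ)*q - N0))) with hW2
  set W1 : ℂ := (((p:ℂ) + Complex.I*(-((b:ℂ)*p + (d:ℂ)*q) + N1))
        - Complex.I*((q:ℂ) + Complex.I*((a:ℂ)*p + (b:ℂ)*q - N0))) with hW1
  set NB : ℂ := ((N0:ℂ) + Complex.I*(N1:ℂ)) with hNB
  set NC : ℂ := ((N0:ℂ) - Complex.I*(N1:ℂ)) with hNC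
  have key : Δc * W2 = num * W1 + Δc * NB + num * NC := by
    rw [hΔdef, hnum, hW2, hW1, hNB, hNC]
    apply Complex.ext <;> simp [Complex.ext_iff] <;>
      [linear_combination (-(p+a*p+b*q)) * hdet; linear_combination (-(q+d*q+b*p)) * hdet]
  calc W2/2 = (Δc * W2)/(Δc*2) := by rw [mul_div_mul_left _ _ hΔC]
    _ = (num * W1 + Δc * NB + num * NC)/(Δc*2) := by rw [key]
    _ = num / Δc * (W1/2) + (NB/2 + num / Δc * (NC/2)) := by field_simp; ring

/-- the generic weak Wirtinger-derivative identity for `u + i v` -/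
lemma s3_weakWirt {D : Set ℂ} (hD : MeasurableSet D) {u v : ℂ → ℝ} {gu gv : ℂ → Fin 2 → ℝ}
    (hul : LocallyIntegrableOn u D) (hvl : LocallyIntegrableOn v D)
    (hgul : LocallyIntegrableOn gu D) (hgvl : LocallyIntegrableOn gv D)
    (hgu : HasWeakGradientOn u gu D) (hgv : HasWeakGradientOn v gv D) (s : ℂ)
    {φ : ℂ → ℂ} (hφ : TestFunC ⊤ D φ) :
    (∫ z in D, ((u z : ℂ) + Complex.I * (v z : ℂ)) *
      ((fderiv ℝ φ z 1 + s * Complex.I * fderiv ℝ φ z Complex.I)/2))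
    = - ∫ z in D, (((gu z 0 : ℝ):ℂ) + Complex.I*((gv z 0 : ℝ):ℂ)
        + s*Complex.I*(((gu z 1 : ℝ):ℂ) + Complex.I*((gv z 1 : ℝ):ℂ)))/2 * φ z := by
  obtain ⟨hφc, hφs, hφsub⟩ := hφ
  have props : ∀ e : ℂ, Continuous (fun z => fderiv ℝ φ z e) ∧
      HasCompactSupport (fun z => fderiv ℝ φ z e) ∧
      tsupport (fun z => fderiv ℝ φ z e) ⊆ D := by
    intro e
    refine ⟨(hφc.continuous_fderiv (by simp)).clm_apply continuous_const,
      (hφs.fderiv ℝ).comp_left (g := fun L : ℂ →L[ℝ] ℂ => L e) rfl, ?_⟩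
    refine subset_trans ?_ (subset_trans (tsupport_fderiv_subset ℝ) hφsub)
    exact closure_mono
      (Function.support_comp_subset (g := fun L : ℂ →L[ℝ] ℂ => L e) rfl (fderiv ℝ φ))
  have i1 : IntegrableOn (fun z => (u z : ℂ) * fderiv ℝ φ z 1) D :=
    s3_mulTest_int hD hul (props 1).1 (props 1).2.1 (props 1).2.2
  have i2 : IntegrableOn (fun z => (u z : ℂ) * fderiv ℝ φ z Complex.I) D :=
    s3_mulTest_int hD hul (props Complex.I).1 (props Complex.I).2.1 (props Complex.I).2.2
  have i3 : IntegrableOn (fun z => (v z : ℂ) * fderiv ℝ φ z 1) D :=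
    s3_mulTest_int hD hvl (props 1).1 (props 1).2.1 (props 1).2.2
  have i4 : IntegrableOn (fun z => (v z : ℂ) * fderiv ℝ φ z Complex.I) D :=
    s3_mulTest_int hD hvl (props Complex.I).1 (props Complex.I).2.1 (props Complex.I).2.2
  have j1 : IntegrableOn (fun z => ((gu z 0 : ℝ):ℂ) * φ z) D :=
    s3_mulTest_int hD (s3_locint_comp hgul 0) hφc.continuous hφs hφsub
  have j2 : IntegrableOn (fun z => ((gu z 1 : ℝ):ℂ) * φ z) D :=
    s3_mulTest_int hD (s3_locint_comp hgul 1) hφc.continuous hφs hφsub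
  have j3 : IntegrableOn (fun z => ((gv z 0 : ℝ):ℂ) * φ z) D :=
    s3_mulTest_int hD (s3_locint_comp hgvl 0) hφc.continuous hφs hφsub
  have j4 : IntegrableOn (fun z => ((gv z 1 : ℝ):ℂ) * φ z) D :=
    s3_mulTest_int hD (s3_locint_comp hgvl 1) hφc.continuous hφs hφsub
  have e1 := s3_weakPartialC hD hul (s3_locint_comp hgul 0) hgu.1 ⟨hφc, hφs, hφsub⟩
  have e2 := s3_weakPartialC hD hul (s3_locint_comp hgul 1) hgu.2 ⟨hφc, hφs, hφsub⟩
  have e3 := s3_weakPartialC hD hvl (s3_locint_comp hgvl 0) hgv.1 ⟨hφc, hφs, hφsub⟩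
  have e4 := s3_weakPartialC hD hvl (s3_locint_comp hgvl 1) hgv.2 ⟨hφc, hφs, hφsub⟩
  calc (∫ z in D, ((u z : ℂ) + Complex.I * (v z : ℂ)) *
          ((fderiv ℝ φ z 1 + s * Complex.I * fderiv ℝ φ z Complex.I)/2))
      = ∫ z in D, ((1/2 : ℂ) * ((u z : ℂ) * fderiv ℝ φ z 1)
          + (Complex.I/2) * ((v z : ℂ) * fderiv ℝ φ z 1)
          + (s*Complex.I/2) * ((u z : ℂ) * fderiv ℝ φ z Complex.I)
          + (s*Complex.I*Complex.I/2) * ((v z : ℂ) * fderiv ℝ φ z Complex.I)) :=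
        integral_congr_ae (Eventually.of_forall fun z => by ring)
    _ = (1/2 : ℂ) * (∫ z in D, (u z : ℂ) * fderiv ℝ φ z 1)
        + (Complex.I/2) * (∫ z in D, (v z : ℂ) * fderiv ℝ φ z 1)
        + (s*Complex.I/2) * (∫ z in D, (u z : ℂ) * fderiv ℝ φ z Complex.I)
        + (s*Complex.I*Complex.I/2) * (∫ z in D, (v z : ℂ) * fderiv ℝ φ z Complex.I) :=
        s3_split4 _ _ _ _ i1 i3 i2 i4
    _ = (1/2 : ℂ) * (- ∫ z in D, ((gu z 0 : ℝ):ℂ) * φ z)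
        + (Complex.I/2) * (- ∫ z in D, ((gv z 0 : ℝ):ℂ) * φ z)
        + (s*Complex.I/2) * (- ∫ z in D, ((gu z 1 : ℝ):ℂ) * φ z)
        + (s*Complex.I*Complex.I/2) * (- ∫ z in D, ((gv z 1 : ℝ):ℂ) * φ z) := by
        rw [e1, e2, e3, e4]
    _ = - ((1/2 : ℂ) * (∫ z in D, ((gu z 0 : ℝ):ℂ) * φ z)
        + (Complex.I/2) * (∫ z in D, ((gv z 0 : ℝ):ℂ) * φ z)
        + (s*Complex.I/2) * (∫ z in D, ((gu z 1 : ℝ):ℂ) * φ z)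
        + (s*Complex.I*Complex.I/2) * (∫ z in D, ((gv z 1 : ℝ):ℂ) * φ z)) := by ring
    _ = - ∫ z in D, ((1/2:ℂ) * (((gu z 0 : ℝ):ℂ) * φ z)
        + (Complex.I/2) * (((gv z 0:ℝ):ℂ) * φ z)
        + (s*Complex.I/2) * (((gu z 1:ℝ):ℂ) * φ z)
        + (s*Complex.I*Complex.I/2) * (((gv z 1:ℝ):ℂ) * φ z)) := by
        rw [s3_split4 _ _ _ _ j1 j3 j2 j4]
    _ = - ∫ z in D, (((gu z 0 : ℝ):ℂ) + Complex.I*((gv z 0 : ℝ):ℂ)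
        + s*Complex.I*(((gu z 1 : ℝ):ℂ) + Complex.I*((gv z 1 : ℝ):ℂ)))/2 * φ z :=
        congrArg Neg.neg (integral_congr_ae (Eventually.of_forall fun z => by ring))

/-- Lemma 3, direct part: if `u` is a weak solution of `div(A∇u) = g`
and `v` is `A`-conjugate of `u`, then `ω = u + iv` satisfies the nondegenerate
inhomogeneous Beltrami equation `ω_z̄ = μ ω_z + σ` with
`μ = (a₂₂ − a₁₁ − 2 i a₂₁)/det(I+A)` and `σ = 𝒩^g_z̄ + μ conj(𝒩^g_z̄)`. -/
theorem statement3
    (D : Set ℂ) (hDo : IsOpen D) (hDc : IsConnected D) (hDb : IsBounded D)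
    (g : ℂ → ℝ) (hg : IntegrableOn g D)
    (A : ℂ → Matrix (Fin 2) (Fin 2) ℝ) (hAS : ∀ z ∈ D, InS22 (A z))
    (hAm : ∀ i j, Measurable fun z => A z i j)
    (hAb : ∃ C : ℝ, ∀ z ∈ D, ∀ i j, |A z i j| ≤ C)
    (u : ℂ → ℝ) (gu : ℂ → Fin 2 → ℝ)
    (hu : IsWeakSolutionDiv A g u gu D ⊤)
    (v : ℂ → ℝ) (gv : ℂ → Fin 2 → ℝ)
    (hvloc : LocallyIntegrableOn v D) (hgvloc : LocallyIntegrableOn gv D)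
    (hgv : HasWeakGradientOn v gv D)
    (hconj : ∀ᵐ z ∂(volume.restrict D),
      gv z = hodge ((A z).mulVec (gu z) - gradVec (logPot g D) z)) :
    ∃ ω₁ ω₂ : ℂ → ℂ,
      HasWeakDzOn (fun z => (u z : ℂ) + Complex.I * (v z : ℂ)) ω₁ D ∧
      HasWeakDzbarOn (fun z => (u z : ℂ) + Complex.I * (v z : ℂ)) ω₂ D ∧
      ∀ᵐ z ∂(volume.restrict D), ω₂ z = muOfA A z * ω₁ z + sigmaOf g D (muOfA A) z := by
  obtain ⟨hul, hgul, hgu, hdiv⟩ := hu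
  have hD : MeasurableSet D := hDo.measurableSet
  refine ⟨fun z => (((gu z 0 : ℝ):ℂ) + Complex.I*((gv z 0 : ℝ):ℂ)
      + (-1 : ℂ)*Complex.I*(((gu z 1 : ℝ):ℂ) + Complex.I*((gv z 1 : ℝ):ℂ)))/2,
    fun z => (((gu z 0 : ℝ):ℂ) + Complex.I*((gv z 0 : ℝ):ℂ)
      + (1 : ℂ)*Complex.I*(((gu z 1 : ℝ):ℂ) + Complex.I*((gv z 1 : ℝ):ℂ)))/2, ?_, ?_, ?_⟩
  · intro φ hφ
    exact (integral_congr_ae (Eventually.of_forall fun z => by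
        show ((u z : ℂ) + Complex.I * (v z : ℂ)) * wDz φ z = _
        rw [wDz]; ring)).trans
      (s3_weakWirt hD hul hvloc hgul hgvloc hgu hgv (-1) hφ)
  · intro φ hφ
    exact (integral_congr_ae (Eventually.of_forall fun z => by
        show ((u z : ℂ) + Complex.I * (v z : ℂ)) * wDzbar φ z = _
        rw [wDzbar]; ring)).trans
      (s3_weakWirt hD hul hvloc hgul hgvloc hgu hgv 1 hφ)
  · filter_upwards [hconj, ae_restrict_mem hD] with z hz hzD
    obtain ⟨hsym, hdet, hpos⟩ := hAS z hzD
    rw [Matrix.det_fin_two, hsym] at hdet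
    have hΔeq : (1 + A z).det
        = (1 + A z 0 0)*(1 + A z 1 1) - A z 1 0 * A z 1 0 := by
      rw [Matrix.det_fin_two]
      simp [Matrix.add_apply, Matrix.one_apply, hsym]
    have hΔne : ((1 + A z).det : ℝ) ≠ 0 := ne_of_gt hpos
    have h0 : gv z 0 = -(A z 1 0 * gu z 0 + A z 1 1 * gu z 1)
        + fderiv ℝ (logPot g D) z Complex.I := by
      rw [hz]
      simp [hodge, gradVec, Matrix.mulVec, dotProduct, Fin.sum_univ_two]
      ring
    have h1 : gv z 1 = A z 0 0 * gu z 0 + A z 1 0 * gu z 1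
        - fderiv ℝ (logPot g D) z 1 := by
      rw [hz]
      simp [hodge, gradVec, Matrix.mulVec, dotProduct, Fin.sum_univ_two, hsym]
    have HH := s3_key_alg (A z 0 0) (A z 1 0) (A z 1 1) (gu z 0) (gu z 1)
      (fderiv ℝ (logPot g D) z 1) (fderiv ℝ (logPot g D) z Complex.I)
      hdet (by rw [← hΔeq]; exact hΔne)
    show _ = muOfA A z * _ + sigmaOf g D (muOfA A) z
    rw [muOfA, sigmaOf, wDzbarR, muOfA, hΔeq, h0, h1]
    have hconjN : (starRingEnd ℂ) ((((fderiv ℝ (logPot g D) z 1 : ℝ):ℂ)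
        + Complex.I*((fderiv ℝ (logPot g D) z Complex.I : ℝ):ℂ))/2)
        = (((fderiv ℝ (logPot g D) z 1 : ℝ):ℂ)
          - Complex.I*((fderiv ℝ (logPot g D) z Complex.I : ℝ):ℂ))/2 := by
      rw [map_div₀, map_add, _root_.map_mul, Complex.conj_I, Complex.conj_ofReal,
        Complex.conj_ofReal, map_ofNat]
      ring
    rw [hconjN]
    push_cast at HH ⊢
    linear_combination HH


end
end

section
/- Let D be a Jordan domain with the quasihyperbolic boundary condition whose boundary has a tangent q.e., let ν : ∂D → ℂ with |ν| ≡ 1 be of class CBV(∂D), let u be a solution of class C^{1,γ}_loc of the Poincare problem with boundary data φ, i.e., the angular limit lim_{z→ζ, z∈D} ∂u/∂ν(z) = φ(ζ) holds at a boundary point ζ with finite φ(ζ), and suppose Re{n(ζ)·conj(ν(ζ))} > 0, where n(ζ) is the inner normal to ∂D at ζ. Then there is a finite limit u(ζ) of u(z) as z → ζ in D along the straight line passing through ζ parallel to ν, and the directional derivative ∂u/∂ν(ζ) := lim_{t→0} (u(ζ + t·ν) − u(ζ))/t exists and equals φ(ζ). -/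
open MeasureTheory Set Filter Topology Metric Complex Bornology Matrix

noncomputable section

lemma aux_oneDim (g g' : ℝ → ℝ) (φ : ℝ) (t₀ : ℝ) (ht₀ : 0 < t₀)
    (hd : ∀ t ∈ Ioo (0:ℝ) t₀, HasDerivAt g (g' t) t)
    (hl : Tendsto g' (𝓝[Ioo (0:ℝ) t₀] 0) (𝓝 φ)) :
    ∃ L : ℝ, Tendsto g (𝓝[>] (0:ℝ)) (𝓝 L) ∧
      Tendsto (fun t => (g t - L) / t) (𝓝[>] (0:ℝ)) (𝓝 φ) := by
  have key : ∀ ε : ℝ, 0 < ε → ∃ δ, 0 < δ ∧ δ ≤ t₀ ∧ ∀ t ∈ Ioo (0:ℝ) δ, |g' t - φ| ≤ ε := by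
    intro ε hε
    have h1 : ∀ᶠ t in 𝓝[Ioo (0:ℝ) t₀] 0, |g' t - φ| < ε := by
      have := Metric.tendsto_nhds.mp hl ε hε
      simpa [Real.dist_eq] using this
    rw [eventually_nhdsWithin_iff, Metric.eventually_nhds_iff] at h1
    obtain ⟨δ, hδ, hδ'⟩ := h1
    refine ⟨min δ t₀, lt_min hδ ht₀, min_le_right _ _, ?_⟩
    intro t ht
    have hdt : dist t 0 < δ := by
      rw [Real.dist_eq, sub_zero, abs_of_pos ht.1]
      exact lt_of_lt_of_le ht.2 (min_le_left _ _)
    exact (hδ' hdt ⟨ht.1, lt_of_lt_of_le ht.2 (min_le_right _ _)⟩).le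
  obtain ⟨δ₁, hδ₁, hδ₁t, hb₁⟩ := key 1 one_pos
  set M : ℝ := |φ| + 1 with hM
  have hMnn : 0 ≤ M := by positivity
  have hsub : Ioo (0:ℝ) δ₁ ⊆ Ioo (0:ℝ) t₀ := Ioo_subset_Ioo le_rfl hδ₁t
  have hlip : LipschitzOnWith (Real.toNNReal M) g (Ioo (0:ℝ) δ₁) := by
    apply LipschitzOnWith.of_dist_le_mul
    intro x hx y hy
    rw [Real.dist_eq, Real.dist_eq, Real.coe_toNNReal M hMnn]
    exact Convex.norm_image_sub_le_of_norm_hasDerivWithin_le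
      (fun t ht => (hd t (hsub ht)).hasDerivWithinAt)
      (fun t ht => by
        have := hb₁ t ht
        rw [Real.norm_eq_abs]
        calc |g' t| = |φ + (g' t - φ)| := by ring_nf
        _ ≤ |φ| + |g' t - φ| := abs_add_le _ _
        _ ≤ M := by rw [hM]; linarith)
      (convex_Ioo _ _) hy hx
  obtain ⟨G, hGlip, hGeq⟩ := hlip.extend_real
  have hmemIoo : Ioo (0:ℝ) δ₁ ∈ 𝓝[>] (0:ℝ) :=
    Ioo_mem_nhdsGT_of_mem ⟨le_rfl, hδ₁⟩
  have hgL : Tendsto g (𝓝[>] (0:ℝ)) (𝓝 (G 0)) := by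
    have h1 : Tendsto G (𝓝[>] (0:ℝ)) (𝓝 (G 0)) :=
      (hGlip.continuous.tendsto 0).mono_left nhdsWithin_le_nhds
    exact h1.congr' (eventually_of_mem hmemIoo fun t ht => (hGeq ht).symm)
  refine ⟨G 0, hgL, ?_⟩
  set L : ℝ := G 0
  rw [Metric.tendsto_nhdsWithin_nhds]
  intro ε hε
  obtain ⟨δε, hδε, hδεt, hbε⟩ := key (ε/2) (half_pos hε)
  refine ⟨δε, hδε, ?_⟩
  intro t ht hdistt
  have htpos : (0:ℝ) < t := ht
  have htI : t ∈ Ioo (0:ℝ) δε := by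
    refine ⟨htpos, ?_⟩
    rw [Real.dist_eq, sub_zero, abs_of_pos htpos] at hdistt
    exact hdistt
  -- MVT estimate for h x = g x - φ x on (0, δε)
  have hsub' : Ioo (0:ℝ) δε ⊆ Ioo (0:ℝ) t₀ := Ioo_subset_Ioo le_rfl hδεt
  have hs : ∀ s ∈ Ioo (0:ℝ) δε, |(g t - φ*t) - (g s - φ*s)| ≤ (ε/2) * |t - s| := by
    intro s hsmem
    have h1 := Convex.norm_image_sub_le_of_norm_hasDerivWithin_le
      (f := fun x => g x - φ * x) (f' := fun x => g' x - φ)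
      (fun x hx => ((hd x (hsub' hx)).sub
        (by simpa using (hasDerivAt_id x).const_mul φ)).hasDerivWithinAt)
      (fun x hx => by rw [Real.norm_eq_abs]; exact hbε x hx)
      (convex_Ioo _ _) hsmem htI
    simpa [Real.norm_eq_abs, mul_comm] using h1
  have hneF : (𝓝[Ioo (0:ℝ) δε] (0:ℝ)).NeBot := by
    apply mem_closure_iff_nhdsWithin_neBot.mp
    rw [closure_Ioo hδε.ne]
    exact ⟨le_rfl, hδε.le⟩
  have hle : 𝓝[Ioo (0:ℝ) δε] (0:ℝ) ≤ 𝓝[>] (0:ℝ) :=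
    nhdsWithin_mono _ Ioo_subset_Ioi_self
  have hgs : Tendsto (fun s => g s - φ*s) (𝓝[Ioo (0:ℝ) δε] (0:ℝ)) (𝓝 L) := by
    have h2 : Tendsto (fun s : ℝ => φ * s) (𝓝[Ioo (0:ℝ) δε] (0:ℝ)) (𝓝 0) := by
      have h3 : Tendsto (fun s : ℝ => φ * s) (𝓝 (0:ℝ)) (𝓝 (φ * 0)) :=
        (continuous_const.mul continuous_id).tendsto (0:ℝ)
      rw [mul_zero] at h3
      exact h3.mono_left nhdsWithin_le_nhds
    simpa using (hgL.mono_left hle).sub h2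
  have hT1 : Tendsto (fun s => |(g t - φ*t) - (g s - φ*s)|) (𝓝[Ioo (0:ℝ) δε] (0:ℝ))
      (𝓝 |(g t - φ*t) - L|) := by
    exact (_root_.continuous_abs.tendsto _).comp (tendsto_const_nhds.sub hgs)
  have hT2 : Tendsto (fun s : ℝ => (ε/2) * |t - s|) (𝓝[Ioo (0:ℝ) δε] (0:ℝ))
      (𝓝 ((ε/2) * |t - 0|)) := by
    exact ((continuous_const.mul (continuous_const.sub continuous_id).abs).tendsto _).mono_left
      nhdsWithin_le_nhds
  have hest : |(g t - φ*t) - L| ≤ (ε/2) * |t - 0| :=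
    le_of_tendsto_of_tendsto hT1 hT2
      (eventually_of_mem self_mem_nhdsWithin fun s hsm => hs s hsm)
  rw [sub_zero, abs_of_pos htpos] at hest
  rw [Real.dist_eq]
  have heq1 : (g t - L)/t - φ = ((g t - φ*t) - L)/t := by
    field_simp; ring
  rw [heq1, abs_div, abs_of_pos htpos, div_lt_iff₀ htpos]
  nlinarith [abs_nonneg ((g t - φ*t) - L)]

/-- Remark 9: if `u ∈ C^{1,γ}_loc(D)` has the angular limit
`∂u/∂ν(z) → φ(ζ)` at a boundary point `ζ` and `Re(n(ζ)·conj(ν(ζ))) > 0` for the inner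
normal `n(ζ)`, then `u` has a finite limit `u(ζ)` along the straight line through `ζ`
parallel to `ν`, and the directional derivative
`∂u/∂ν(ζ) = lim_{t→0} (u(ζ + tν) − u(ζ))/t` exists and equals `φ(ζ)`. -/
theorem statement12
    (D : Set ℂ) (hJ : JordanDomain D) (hQH : QuasihyperbolicBC D)
    (htan : QEOn (frontier D) (fun ξ => HasTangentAt D ξ))
    (ν : ℂ → ℂ) (hν1 : ∀ ξ ∈ frontier D, ‖ν ξ‖ = 1)
    (hνBV : CBVOn ν (frontier D))
    (γ : ℝ) (u : ℂ → ℝ) (hu : MemC1HolderLocOn u γ D)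
    (ζ : ℂ) (hζ : ζ ∈ frontier D) (φζ : ℝ)
    (hlim : AngularLimitAt (fun z => fderiv ℝ u z (ν ζ)) D ζ φζ)
    (n : ℂ) (hn : IsInnerNormalAt D ζ n)
    (hpos : 0 < (n * (starRingEnd ℂ) (ν ζ)).re) :
    ∃ L : ℝ,
      Tendsto (fun t : ℝ => u (ζ + (t : ℂ) * ν ζ)) (𝓝[>] 0) (𝓝 L) ∧
      Tendsto (fun t : ℝ => (u (ζ + (t : ℂ) * ν ζ) - L) / t) (𝓝[>] 0) (𝓝 φζ) := by
  obtain ⟨hDopen, hDconn, hDbdd, -⟩ := hJ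
  obtain ⟨hnabs, ⟨hτabs, htang⟩, ε₀, hε₀, hεin⟩ := hn
  set ν₀ : ℂ := ν ζ with hν₀def
  have hνabs : ‖ν₀‖ = 1 := hν1 ζ hζ
  set a : ℝ := (n * (starRingEnd ℂ) ν₀).re with ha_def
  have ha : 0 < a := hpos
  have ha1 : a ≤ 1 := by
    calc a ≤ ‖n * (starRingEnd ℂ) ν₀‖ := Complex.re_le_norm _
    _ = 1 := by rw [norm_mul, Complex.norm_conj, hnabs, hνabs, one_mul]
  have hn0 : n ≠ 0 := by
    intro h; rw [h] at hnabs; simp at hnabs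
  have hnc : n * (starRingEnd ℂ) n = 1 := by
    rw [Complex.mul_conj, Complex.normSq_eq_norm_sq, hnabs]; norm_num
  have haconv : (ν₀ * (starRingEnd ℂ) n).re = a := by
    rw [ha_def]
    have h1 : n * (starRingEnd ℂ) ν₀ = (starRingEnd ℂ) (ν₀ * (starRingEnd ℂ) n) := by
      rw [_root_.map_mul, Complex.conj_conj]; ring
    rw [h1, Complex.conj_re]
  have hre : ∀ v : ℂ, |(v * (starRingEnd ℂ) n).re| ≤ ‖v‖ := by
    intro v
    calc |(v * (starRingEnd ℂ) n).re| ≤ ‖v * (starRingEnd ℂ) n‖ :=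
        Complex.abs_re_le_norm _
    _ = ‖v‖ := by rw [norm_mul, Complex.norm_conj, hnabs, mul_one]
  -- tangent cone bound
  obtain ⟨δ', hδ'pos, hδ'⟩ := htang (a/8) (by positivity)
  have hδcone : ∀ w ∈ frontier D, ‖w - ζ‖ < δ' →
      |((w - ζ) * (starRingEnd ℂ) n).re| ≤ (a/8) * ‖w - ζ‖ := by
    intro w hw hwδ
    have h1 := hδ' w hw hwδ
    have h2 : (w - ζ) / (Complex.I * n) =
        -Complex.I * ((w - ζ) * (starRingEnd ℂ) n) := by
      rw [div_eq_iff (mul_ne_zero Complex.I_ne_zero hn0)]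
      linear_combination (ζ - w) * hnc + (w - ζ) * (starRingEnd ℂ) n * n * Complex.I_sq
    rw [h2] at h1
    have h3 : (-Complex.I * ((w - ζ) * (starRingEnd ℂ) n)).im =
        -((w - ζ) * (starRingEnd ℂ) n).re := by
      rw [Complex.mul_im]; simp
    rw [h3, abs_neg] at h1
    exact h1
  set δ₁ : ℝ := δ' / 2 with hδ₁def
  have hδ₁pos : 0 < δ₁ := by positivity
  have hFne : (frontier D).Nonempty := ⟨ζ, hζ⟩
  -- distance estimate
  have hdist : ∀ v : ℂ, (a/2) * ‖v‖ ≤ (v * (starRingEnd ℂ) n).re →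
      ‖v‖ < δ₁ → ∀ w ∈ frontier D,
      (a/8) * ‖v‖ ≤ ‖ζ + v - w‖ := by
    intro v hv hvδ w hw
    have hA : (0:ℝ) ≤ ‖v‖ := norm_nonneg _
    have hB : (0:ℝ) ≤ ‖ζ + v - w‖ := norm_nonneg _
    have hC : ‖w - ζ‖ ≤ ‖ζ + v - w‖ + ‖v‖ := by
      have he : w - ζ = (w - (ζ + v)) + v := by ring
      rw [he]
      refine (norm_add_le _ _).trans ?_
      rw [norm_sub_rev w (ζ + v)]
    by_cases hcase : ‖w - ζ‖ < δ'
    · have hb := abs_le.mp (hδcone w hw hcase)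
      have h2 : ((ζ + v - w) * (starRingEnd ℂ) n).re =
          (v * (starRingEnd ℂ) n).re - ((w - ζ) * (starRingEnd ℂ) n).re := by
        have he : ζ + v - w = v - (w - ζ) := by ring
        rw [he, sub_mul, Complex.sub_re]
      have h1 : ((ζ + v - w) * (starRingEnd ℂ) n).re ≤ ‖ζ + v - w‖ :=
        (le_abs_self _).trans (hre _)
      nlinarith [mul_nonneg ha.le hA, mul_nonneg ha.le hB,
        mul_nonneg (mul_nonneg ha.le ha.le) hA]
    · push_neg at hcase
      have hvδ' : ‖v‖ < δ' / 2 := hvδ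
      nlinarith [mul_nonneg (by linarith : (0:ℝ) ≤ 8 - a) hA]
  have hinf : ∀ v : ℂ, (a/2) * ‖v‖ ≤ (v * (starRingEnd ℂ) n).re →
      ‖v‖ < δ₁ → (a/8) * ‖v‖ ≤ infDist (ζ + v) (frontier D) := by
    intro v hv hvδ
    by_contra hlt
    push_neg at hlt
    obtain ⟨w, hw, hwd⟩ := (infDist_lt_iff hFne).mp hlt
    rw [Complex.dist_eq] at hwd
    exact absurd (hdist v hv hvδ w hw) (not_le.mpr hwd)
  set t₀ : ℝ := min δ₁ ε₀ with ht₀def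
  have ht₀pos : 0 < t₀ := lt_min hδ₁pos hε₀
  -- membership along the segment
  have hmem : ∀ t ∈ Ioo (0:ℝ) t₀, ζ + (t:ℂ) * ν₀ ∈ D := by
    intro t ht
    have hq : ζ + (t:ℂ) * n ∈ D := hεin t ⟨ht.1, lt_of_lt_of_le ht.2 (min_le_right _ _)⟩
    have hseg : segment ℝ (ζ + (t:ℂ) * n) (ζ + (t:ℂ) * ν₀) ⊆ D ∪ (closure D)ᶜ := by
      intro x hx
      obtain ⟨α, β, hα, hβ, hαβ, hxeq⟩ := hx
      have hαβc : (α:ℂ) + (β:ℂ) = 1 := by exact_mod_cast hαβ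
      have hxv : x = ζ + ((↑(α*t)) * n + (↑(β*t)) * ν₀) := by
        rw [← hxeq, Complex.real_smul, Complex.real_smul]
        push_cast
        linear_combination ζ * hαβc
      set v : ℂ := (↑(α*t)) * n + (↑(β*t)) * ν₀ with hvdef
      have hvre : (v * (starRingEnd ℂ) n).re = α*t + β*t*a := by
        rw [hvdef, add_mul, Complex.add_re, mul_assoc, mul_assoc, hnc, mul_one,
          Complex.ofReal_re, Complex.re_ofReal_mul, haconv]
      have hvabs : ‖v‖ ≤ t := by
        rw [hvdef]
        refine (norm_add_le _ _).trans ?_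
        rw [norm_mul, norm_mul, Complex.norm_real, Complex.norm_real, Real.norm_eq_abs, Real.norm_eq_abs,
          hnabs, hνabs,
          _root_.abs_of_nonneg (mul_nonneg hα ht.1.le),
          _root_.abs_of_nonneg (mul_nonneg hβ ht.1.le)]
        have hsum : α * t + β * t = t := by linear_combination t * hαβ
        linarith
      have hsum : α * t + β * t = t := by linear_combination t * hαβ
      have hvre_pos : 0 < α*t + β*t*a := by
        nlinarith [hsum, mul_nonneg (mul_nonneg hα ht.1.le) (by linarith : (0:ℝ) ≤ 1 - a),
          mul_pos ha ht.1]
      have hvne : v ≠ 0 := by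
        intro h
        rw [h] at hvre
        simp at hvre
        linarith
      have hcone : (a/2) * ‖v‖ ≤ (v * (starRingEnd ℂ) n).re := by
        rw [hvre]
        have h1 : (a/2) * ‖v‖ ≤ (a/2) * t :=
          mul_le_mul_of_nonneg_left hvabs (by positivity)
        nlinarith [hsum, mul_nonneg (mul_nonneg hα ht.1.le) (by linarith : (0:ℝ) ≤ 2 - a),
          mul_nonneg (mul_nonneg hβ ht.1.le) ha.le]
      have hvabs_lt : ‖v‖ < δ₁ :=
        lt_of_le_of_lt hvabs (lt_of_lt_of_le ht.2 (min_le_left _ _))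
      have hxF : x ∉ frontier D := by
        intro hxf
        have hd1 := hdist v hcone hvabs_lt x hxf
        have habs0 : ‖ζ + v - x‖ = 0 := by rw [hxv]; simp
        have hvp : 0 < ‖v‖ := norm_pos_iff.mpr hvne
        rw [habs0] at hd1
        nlinarith
      by_cases hxc : x ∈ closure D
      · left
        by_contra hni
        refine hxF ⟨hxc, ?_⟩
        rwa [hDopen.interior_eq]
      · right; exact hxc
    have hconn := (convex_segment (ζ + (t:ℂ) * n) (ζ + (t:ℂ) * ν₀)).isPreconnected
    have hsub := hconn.subset_left_of_subset_union hDopen isClosed_closure.isOpen_compl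
      (disjoint_compl_right.mono_left subset_closure) hseg
      ⟨ζ + (t:ℂ) * n, left_mem_segment ℝ _ _, hq⟩
    exact hsub (right_mem_segment ℝ _ _)
  -- derivative along the line
  have hc : ∀ t : ℝ, HasDerivAt (fun s : ℝ => ζ + (s:ℂ) * ν₀) ν₀ t := by
    intro t
    have h1 := ((hasDerivAt_id t).smul_const ν₀).const_add ζ
    simpa [Complex.real_smul] using h1
  have hd : ∀ t ∈ Ioo (0:ℝ) t₀,
      HasDerivAt (fun s : ℝ => u (ζ + (s:ℂ) * ν₀)) (fderiv ℝ u (ζ + (t:ℂ) * ν₀) ν₀) t := by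
    intro t ht
    have hz : ζ + (t:ℂ) * ν₀ ∈ D := hmem t ht
    obtain ⟨U, hUo, hzU, hUD, hC1, -⟩ := hu _ hz
    have hdiff : DifferentiableAt ℝ u (ζ + (t:ℂ) * ν₀) :=
      (hC1.contDiffAt (hUo.mem_nhds hzU)).differentiableAt one_ne_zero
    have := hdiff.hasFDerivAt.comp_hasDerivAt t (hc t)
    exact this
  -- limit of the derivative
  have h8a : 1 < 8 / a := by
    rw [lt_div_iff₀ ha]; linarith
  have hl : Tendsto (fun t : ℝ => fderiv ℝ u (ζ + (t:ℂ) * ν₀) ν₀)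
      (𝓝[Ioo (0:ℝ) t₀] 0) (𝓝 φζ) := by
    have habs : ∀ t : ℝ, 0 < t → ‖(t:ℂ) * ν₀‖ = t := by
      intro t htp
      rw [norm_mul, Complex.norm_real, Real.norm_eq_abs, hνabs, mul_one, abs_of_pos htp]
    have happ : Tendsto (fun t : ℝ => ζ + (t:ℂ) * ν₀) (𝓝[Ioo (0:ℝ) t₀] 0)
        (𝓝[{z | z ∈ D ∧ ‖z - ζ‖ ≤ (8/a) * infDist z (frontier D)}] ζ) := by
      rw [tendsto_nhdsWithin_iff]
      constructor
      · have h1 : Tendsto (fun t : ℝ => ζ + (t:ℂ) * ν₀) (𝓝 0) (𝓝 (ζ + ((0:ℝ):ℂ) * ν₀)) := by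
          exact ((continuous_const.add (Complex.continuous_ofReal.mul
            continuous_const)).tendsto 0)
        simp only [Complex.ofReal_zero, zero_mul, add_zero] at h1
        exact h1.mono_left nhdsWithin_le_nhds
      · refine eventually_of_mem self_mem_nhdsWithin ?_
        intro t ht
        refine ⟨hmem t ht, ?_⟩
        have h1 : ‖(ζ + (t:ℂ) * ν₀) - ζ‖ = t := by
          rw [add_sub_cancel_left]; exact habs t ht.1
        have hvc : (a/2) * ‖(t:ℂ) * ν₀‖ ≤ (((t:ℂ) * ν₀) * (starRingEnd ℂ) n).re := by
          rw [habs t ht.1, mul_assoc, Complex.re_ofReal_mul, haconv]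
          nlinarith [ht.1]
        have hvlt : ‖(t:ℂ) * ν₀‖ < δ₁ := by
          rw [habs t ht.1]; exact lt_of_lt_of_le ht.2 (min_le_left _ _)
        have hinf' := hinf ((t:ℂ) * ν₀) hvc hvlt
        rw [habs t ht.1] at hinf'
        rw [h1]
        calc t = (8/a) * ((a/8) * t) := by field_simp
        _ ≤ (8/a) * infDist (ζ + (t:ℂ) * ν₀) (frontier D) := by
            apply mul_le_mul_of_nonneg_left hinf' (by positivity)
    exact (hlim (8/a) h8a).comp happ
  obtain ⟨L, h1, h2⟩ := aux_oneDim (fun t => u (ζ + (t:ℂ) * ν₀))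
    (fun t => fderiv ℝ u (ζ + (t:ℂ) * ν₀) ν₀) φζ t₀ ht₀pos hd hl
  exact ⟨L, h1, h2⟩


end
end
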